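/- (Theorem 2: Distributed Algorithm Sensitivity.) Consider matrices A ∈ ℝ^{n×n}, B ∈ ℝ^{n×n_u}, C_y ∈ ℝ^{n_y×n}, C_ω ∈ ℝ^{n_ω×n}, filter matrices A_Ψ, B_Ψ^y, B_Ψ^u, C_Ψ, D_Ψ^y, D_Ψ^u, a symmetric matrix M, invariant matrices F_ξ, F_u, and a symmetric positive definite R ∈ ℝ^{n_u×n_u}. Let (Ω, 𝔉, μ) be a probability space and let w^t : Ω → ℝ^{n_u}, t ∈ ℕ, be square-integrable random vectors that are mutually independent, with E[w^t] = 0 and E[w^t (w^t)ᵀ] ⪯ R for every t. Let ξ^t, u^t, ψ^t, z^t be square-integrable random sequences and ξ*, u*, ψ*, z* deterministic vectors such that, pathwise (for every sample and every t), with y^t = C_yξ^t, y* = C_yξ*: (i) ξ^{t+1} = Aξ^t + B(u^t + w^t), with ξ^0 deterministic; (ii) ψ^{t+1} = A_Ψψ^t + B_Ψ^y y^t + B_Ψ^u u^t with ψ^0 = ψ*, and z^t = C_Ψψ^t + D_Ψ^y y^t + D_Ψ^u u^t; (iii) ξ* = Aξ* + Bu*, ψ* = A_Ψψ* + B_Ψ^y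 y* + B_Ψ^u u*, z* = C_Ψψ* + D_Ψ^y y* + D_Ψ^u u*; (iv) F_ξξ^t + F_u u^t = 0 and F_ξξ* + F_u u* = 0; (v) the hard IQC Σ_{t=0}^{T}(z^t − z*)ᵀM(z^t − z*) ≥ 0 holds pathwise for every T; and (vi) for each t, the pair (ξ^t, ψ^t, u^t) is independent of w^t. Define Â = [[A, 0],[B_Ψ^y C_y, A_Ψ]], B̂ = [B; B_Ψ^u], Ĉ = [D_Ψ^y C_y, C_Ψ], D̂ = D_Ψ^u, and write ω^t = C_ωξ^t, ω* = C_ωξ*. If there exist a symmetric positive semidefinite P ∈ ℝ^{(n+n_ψ)×(n+n_ψ)}, partitioned as P = [[P₁₁, P₁₂],[P₁₂ᵀ, P₂₂]] conformably with the (ξ, ψ) blocks, and λ ≥ 0 such that for every (v_ξ, v_ψ, v_u) with F_ξ v_ξ + F_u v_u = 0, writing ṽ = (v_ξ, v_ψ): (Âṽ + B̂v_u)ᵀP(Âṽ + B̂v_u) − ṽᵀPṽ + λ·(Ĉṽ + D̂v_u)ᵀM(Ĉṽ + D̂v_u) + ‖C_ω v_ξ‖² ≤ 0, then limsup_{T→∞}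 (1/T) Σ_{t=0}^{T−1} E‖ω^t − ω*‖² ≤ tr(R·BᵀP₁₁B); i.e., the sensitivity γ satisfies γ ≤ √(tr(R·BᵀP₁₁B)). -/

import Mathlib

open Matrix Finset MeasureTheory ProbabilityTheory

section Aux

variable {Ω : Type*} [MeasurableSpace Ω] {μ : Measure Ω}

lemma aux_integrable_mul {f g : Ω → ℝ} (hf : MemLp f 2 μ) (hg : MemLp g 2 μ) :
    Integrable (fun x => f x * g x) μ := by
  have h1 := (hf.add hg).integrable_sq
  have h2 := hf.integrable_sq
  have h3 := hg.integrable_sq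
  have he : (fun x => f x * g x)
      = fun x => (((f + g) x) ^ 2 - f x ^ 2 - g x ^ 2) / 2 := by
    funext x; simp only [Pi.add_apply]; ring
  rw [he]
  exact ((h1.sub h2).sub h3).div_const 2

lemma aux_comp_proj {m : ℕ} {f : Ω → Fin m → ℝ} (hf : MemLp f 2 μ) (i : Fin m) :
    MemLp (fun x => f x i) 2 μ :=
  (ContinuousLinearMap.proj (R := ℝ) (φ := fun _ : Fin m => ℝ) i).comp_memLp' hf

lemma aux_mulVec_memLp {m k : Type*} [Fintype k] (N : Matrix m k ℝ)
    {v : Ω → k → ℝ} (hv : ∀ j, MemLp (fun x => v x j) 2 μ) (i : m) :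
    MemLp (fun x => N.mulVec (v x) i) 2 μ := by
  simp only [Matrix.mulVec, dotProduct]
  have := memLp_finset_sum (μ := μ) (p := 2) Finset.univ
    (f := fun j x => N i j * v x j) (fun j _ => (hv j).const_mul (N i j))
  simpa using this

lemma aux_integrable_dot {k : Type*} [Fintype k] {f g : Ω → k → ℝ}
    (hf : ∀ j, MemLp (fun x => f x j) 2 μ) (hg : ∀ j, MemLp (fun x => g x j) 2 μ) :
    Integrable (fun x => f x ⬝ᵥ g x) μ := by
  simp only [dotProduct]
  exact integrable_finset_sum _ (fun j _ => aux_integrable_mul (hf j) (hg j))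

lemma aux_continuous_mulVec {m k : Type*} [Fintype k] (N : Matrix m k ℝ) :
    Continuous fun v : k → ℝ => N.mulVec v := by
  apply continuous_pi; intro i
  simp only [Matrix.mulVec, dotProduct]
  exact continuous_finset_sum _ fun j _ => continuous_const.mul (continuous_apply j)

lemma aux_trace_nonneg {k : Type*} [Fintype k] [DecidableEq k] {S : Matrix k k ℝ}
    (hS : S.PosSemidef) : 0 ≤ S.trace := by
  rw [Matrix.trace]
  refine Finset.sum_nonneg fun i _ => ?_
  exact hS.diag_nonneg

lemma aux_trace_mul_nonneg {k : ℕ} {S Q : Matrix (Fin k) (Fin k) ℝ}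
    (hS : S.PosSemidef) (hQ : Q.PosSemidef) : 0 ≤ (S * Q).trace := by
  classical
  open scoped MatrixOrder in
  obtain ⟨X, rfl⟩ := CStarAlgebra.nonneg_iff_eq_star_mul_self.mp hS.nonneg
  rw [Matrix.mul_assoc, Matrix.trace_mul_comm, Matrix.star_eq_conjTranspose]
  exact aux_trace_nonneg (hQ.mul_mul_conjTranspose_same X)

lemma aux_trace_mono {k : ℕ} {S R Q : Matrix (Fin k) (Fin k) ℝ}
    (hSR : (R - S).PosSemidef) (hQ : Q.PosSemidef) : (S * Q).trace ≤ (R * Q).trace := by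
  have h := aux_trace_mul_nonneg hSR hQ
  rw [Matrix.sub_mul, Matrix.trace_sub] at h
  linarith

lemma aux_limsup_le {a : ℕ → ℝ} {C c : ℝ} (h0 : ∀ T, 0 ≤ a T)
    (h : ∀ T : ℕ, 1 ≤ T → a T ≤ C / T + c) :
    Filter.limsup a Filter.atTop ≤ c := by
  have hb : Filter.Tendsto (fun T : ℕ => C / T + c) Filter.atTop (nhds c) := by
    simpa using (tendsto_const_div_atTop_nhds_zero_nat C).add (tendsto_const_nhds (x := c))
  have h1 : Filter.limsup a Filter.atTop
      ≤ Filter.limsup (fun T : ℕ => C / T + c) Filter.atTop := by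
    refine Filter.limsup_le_limsup ?_ ?_ ?_
    · exact Filter.eventually_atTop.2 ⟨1, h⟩
    · exact (Filter.isBoundedUnder_of ⟨0, h0⟩).isCoboundedUnder_le
    · exact hb.isBoundedUnder_le
  rwa [hb.limsup_eq] at h1

end Aux


section Aux2

variable {Ω : Type*} [MeasurableSpace Ω] {μ : Measure Ω} [IsProbabilityMeasure μ]

lemma aux_dot_mulVec_expand {m k : Type*} [Fintype m] [Fintype k] (N : Matrix m k ℝ)
    (h : m → ℝ) (v : k → ℝ) :
    h ⬝ᵥ N.mulVec v = ∑ j, (∑ i, N i j * h i) * v j := by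
  simp only [dotProduct, Matrix.mulVec, Finset.mul_sum, Finset.sum_mul]
  rw [Finset.sum_comm]
  exact Finset.sum_congr rfl fun j _ => Finset.sum_congr rfl fun i _ => by ring

lemma aux_memLp_sum_mul {m : Type*} [Fintype m] {v : Ω → m → ℝ}
    (hv : ∀ i, MemLp (fun x => v x i) 2 μ) (a : m → ℝ) :
    MemLp (fun x => ∑ i, a i * v x i) 2 μ := by
  have := memLp_finset_sum (μ := μ) (p := 2) Finset.univ
    (f := fun i x => a i * v x i) (fun i _ => (hv i).const_mul (a i))
  simpa using this

end Aux2

/-- **Theorem 2 (Distributed Algorithm Sensitivity).**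
Consider the noisy algorithm `ξ^{t+1} = A ξ^t + B (u^t + w^t)`, `y^t = C_y ξ^t`,
`ω^t = C_ω ξ^t`, with invariant `F_ξ ξ^t + F_u u^t = 0`, deterministic fixed point
`(ξ*, u*, ψ*, z*)`, IQC filter `Ψ` initialized at its fixed point whose output
satisfies the hard IQC pathwise, and zero-mean, mutually independent,
square-integrable noise `w^t` with covariance bounded by `R` and independent of
`(ξ^t, ψ^t, u^t)`. If there exist a positive semidefinite `P` (with `(1,1)` block
`P₁₁`) and `λ ≥ 0` satisfying the sensitivity LMI on the nullspace of
`[F_ξ, 0, F_u]`, then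
`limsup_{T→∞} (1/T) ∑_{t<T} E‖ω^t − ω*‖² ≤ tr(R Bᵀ P₁₁ B)`. -/
theorem distributed_sensitivity
    {n n_u n_y n_w n_ψ n_z n_F : ℕ}
    (A : Matrix (Fin n) (Fin n) ℝ) (B : Matrix (Fin n) (Fin n_u) ℝ)
    (Cy : Matrix (Fin n_y) (Fin n) ℝ) (Cω : Matrix (Fin n_w) (Fin n) ℝ)
    (AΨ : Matrix (Fin n_ψ) (Fin n_ψ) ℝ)
    (BΨy : Matrix (Fin n_ψ) (Fin n_y) ℝ) (BΨu : Matrix (Fin n_ψ) (Fin n_u) ℝ)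
    (CΨ : Matrix (Fin n_z) (Fin n_ψ) ℝ)
    (DΨy : Matrix (Fin n_z) (Fin n_y) ℝ) (DΨu : Matrix (Fin n_z) (Fin n_u) ℝ)
    (M : Matrix (Fin n_z) (Fin n_z) ℝ) (hM : M.IsHermitian)
    (Fξ : Matrix (Fin n_F) (Fin n) ℝ) (Fu : Matrix (Fin n_F) (Fin n_u) ℝ)
    (R : Matrix (Fin n_u) (Fin n_u) ℝ) (hR : R.PosDef)
    -- the probability space and the noise process
    (Ω : Type*) [MeasurableSpace Ω] (μ : Measure Ω) [IsProbabilityMeasure μ]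
    (w : ℕ → Ω → Fin n_u → ℝ)
    (hwmeas : ∀ t, Measurable (w t))
    (hwL2 : ∀ t, MemLp (w t) 2 μ)
    (hwindep : iIndepFun w μ)
    (hwmean : ∀ t, ∫ x, w t x ∂μ = 0)
    (hwcov : ∀ t,
      (R - Matrix.of (fun j j' : Fin n_u => ∫ x, w t x j * w t x j' ∂μ)).PosSemidef)
    -- stochastic trajectories and deterministic fixed point
    (ξ : ℕ → Ω → Fin n → ℝ) (u : ℕ → Ω → Fin n_u → ℝ)
    (ψ : ℕ → Ω → Fin n_ψ → ℝ) (z : ℕ → Ω → Fin n_z → ℝ)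
    (ξs : Fin n → ℝ) (us : Fin n_u → ℝ) (ψs : Fin n_ψ → ℝ) (zs : Fin n_z → ℝ)
    (hξmeas : ∀ t, Measurable (ξ t)) (humeas : ∀ t, Measurable (u t))
    (hψmeas : ∀ t, Measurable (ψ t)) (hzmeas : ∀ t, Measurable (z t))
    (hξL2 : ∀ t, MemLp (ξ t) 2 μ) (huL2 : ∀ t, MemLp (u t) 2 μ)
    (hψL2 : ∀ t, MemLp (ψ t) 2 μ) (hzL2 : ∀ t, MemLp (z t) 2 μ)
    -- (i) noisy algorithm dynamics, with deterministic initial condition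
    (hξ : ∀ x t, ξ (t + 1) x = A.mulVec (ξ t x) + B.mulVec (u t x + w t x))
    (hξ0 : ∃ c, ∀ x, ξ 0 x = c)
    -- (ii) IQC filter dynamics, initialized at the fixed point
    (hψ0 : ∀ x, ψ 0 x = ψs)
    (hψ : ∀ x t, ψ (t + 1) x =
      AΨ.mulVec (ψ t x) + BΨy.mulVec (Cy.mulVec (ξ t x)) + BΨu.mulVec (u t x))
    (hz : ∀ x t, z t x =
      CΨ.mulVec (ψ t x) + DΨy.mulVec (Cy.mulVec (ξ t x)) + DΨu.mulVec (u t x))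
    -- (iii) fixed-point relations
    (hξs : ξs = A.mulVec ξs + B.mulVec us)
    (hψs : ψs = AΨ.mulVec ψs + BΨy.mulVec (Cy.mulVec ξs) + BΨu.mulVec us)
    (hzs : zs = CΨ.mulVec ψs + DΨy.mulVec (Cy.mulVec ξs) + DΨu.mulVec us)
    -- (iv) invariant
    (hinv : ∀ x t, Fξ.mulVec (ξ t x) + Fu.mulVec (u t x) = 0)
    (hinvs : Fξ.mulVec ξs + Fu.mulVec us = 0)
    -- (v) hard IQC, pathwise
    (hIQC : ∀ x, ∀ T : ℕ, 0 ≤ ∑ t ∈ Finset.range (T + 1),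
      (z t x - zs) ⬝ᵥ M.mulVec (z t x - zs))
    -- (vi) `(ξ^t, ψ^t, u^t)` is independent of `w^t`
    (hindep : ∀ t, IndepFun (fun x => (ξ t x, ψ t x, u t x)) (w t) μ)
    -- LMI certificate
    (P : Matrix (Fin n ⊕ Fin n_ψ) (Fin n ⊕ Fin n_ψ) ℝ) (hP : P.PosSemidef)
    (lam : ℝ) (hlam : 0 ≤ lam)
    (hLMI : ∀ (vξ : Fin n → ℝ) (vψ : Fin n_ψ → ℝ) (vu : Fin n_u → ℝ),
      Fξ.mulVec vξ + Fu.mulVec vu = 0 →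
      letI Ahat : Matrix (Fin n ⊕ Fin n_ψ) (Fin n ⊕ Fin n_ψ) ℝ :=
        Matrix.fromBlocks A 0 (BΨy * Cy) AΨ
      letI Bhat : Matrix (Fin n ⊕ Fin n_ψ) (Fin n_u) ℝ := Matrix.fromRows B BΨu
      letI Chat : Matrix (Fin n_z) (Fin n ⊕ Fin n_ψ) ℝ :=
        Matrix.fromCols (DΨy * Cy) CΨ
      letI v : (Fin n ⊕ Fin n_ψ) → ℝ := Sum.elim vξ vψ
      letI vnext : (Fin n ⊕ Fin n_ψ) → ℝ := Ahat.mulVec v + Bhat.mulVec vu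
      letI zv : Fin n_z → ℝ := Chat.mulVec v + DΨu.mulVec vu
      vnext ⬝ᵥ P.mulVec vnext - v ⬝ᵥ P.mulVec v
        + lam * (zv ⬝ᵥ M.mulVec zv)
        + ∑ i, (Cω.mulVec vξ i) ^ 2 ≤ 0) :
    Filter.limsup
      (fun T : ℕ => (1 / (T : ℝ)) * ∑ t ∈ Finset.range T,
        ∫ x, (∑ i, (Cω.mulVec (ξ t x) i - Cω.mulVec ξs i) ^ 2) ∂μ)
      Filter.atTop
      ≤ (R * (Bᵀ * P.toBlocks₁₁ * B)).trace := by
  classical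
  set Ahat : Matrix (Fin n ⊕ Fin n_ψ) (Fin n ⊕ Fin n_ψ) ℝ :=
    Matrix.fromBlocks A 0 (BΨy * Cy) AΨ with hAhat
  set Bhat : Matrix (Fin n ⊕ Fin n_ψ) (Fin n_u) ℝ := Matrix.fromRows B BΨu with hBhat
  set Chat : Matrix (Fin n_z) (Fin n ⊕ Fin n_ψ) ℝ :=
    Matrix.fromCols (DΨy * Cy) CΨ with hChat
  set Btil : Matrix (Fin n ⊕ Fin n_ψ) (Fin n_u) ℝ :=
    Matrix.fromRows B (0 : Matrix (Fin n_ψ) (Fin n_u) ℝ) with hBtil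
  set Q : Matrix (Fin n_u) (Fin n_u) ℝ := Btilᵀ * P * Btil with hQdef
  -- identification of the (1,1) block quadratic form
  have hQid : Bᵀ * P.toBlocks₁₁ * B = Q := by
    rw [hQdef, hBtil]
    ext j j'
    simp [Matrix.mul_apply, Fintype.sum_sum_type, Matrix.toBlocks₁₁,
      Matrix.fromRows_apply_inl, Matrix.fromRows_apply_inr, Matrix.transpose_apply,
      Finset.sum_mul, Finset.mul_sum]
  have hQpsd : Q.PosSemidef := by
    have h := hP.conjTranspose_mul_mul_same Btil
    rwa [Matrix.conjTranspose_eq_transpose_of_trivial] at h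
  -- square integrability of components
  have hξc : ∀ s i, MemLp (fun x => ξ s x i) 2 μ := fun s i => aux_comp_proj (hξL2 s) i
  have hwc : ∀ s j, MemLp (fun x => w s x j) 2 μ := fun s j => aux_comp_proj (hwL2 s) j
  have hηc : ∀ (s : ℕ) (i : Fin n ⊕ Fin n_ψ),
      MemLp (fun x => Sum.elim (ξ s x - ξs) (ψ s x - ψs) i) 2 μ := by
    intro s i
    match i with
    | Sum.inl i => exact (aux_comp_proj (hξL2 s) i).sub (memLp_const (ξs i))
    | Sum.inr i => exact (aux_comp_proj (hψL2 s) i).sub (memLp_const (ψs i))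
  have hduc : ∀ s j, MemLp (fun x => (u s x - us) j) 2 μ :=
    fun s j => (aux_comp_proj (huL2 s) j).sub (memLp_const (us j))
  have hffc : ∀ s i, MemLp (fun x =>
      (Ahat.mulVec (Sum.elim (ξ s x - ξs) (ψ s x - ψs)) + Bhat.mulVec (u s x - us)) i) 2 μ := by
    intro s i
    have h1 : MemLp (fun x => Ahat.mulVec (Sum.elim (ξ s x - ξs) (ψ s x - ψs)) i) 2 μ :=
      aux_mulVec_memLp Ahat (v := fun x => Sum.elim (ξ s x - ξs) (ψ s x - ψs)) (hηc s) i
    have h2 : MemLp (fun x => Bhat.mulVec (u s x - us) i) 2 μ :=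
      aux_mulVec_memLp Bhat (v := fun x => u s x - us) (hduc s) i
    exact h1.add h2
  have hzsc : ∀ s i, MemLp (fun x => (z s x - zs) i) 2 μ :=
    fun s i => (aux_comp_proj (hzL2 s) i).sub (memLp_const (zs i))
  have hGGc : ∀ s i, MemLp (fun x => Btil.mulVec (w s x) i) 2 μ :=
    fun s i => aux_mulVec_memLp Btil (v := fun x => w s x) (hwc s) i
  -- mean zero componentwise
  have hwmean' : ∀ s j, ∫ x, w s x j ∂μ = 0 := by
    intro s j
    have hInt : Integrable (w s) μ := (hwL2 s).integrable one_le_two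
    have h := (ContinuousLinearMap.proj (R := ℝ) (φ := fun _ : Fin n_u => ℝ)
      j).integral_comp_comm hInt
    rw [hwmean s] at h
    simpa using h
  -- independence helper
  have hindepφ : ∀ (s : ℕ) (j : Fin n_u) (c : Ω → ℝ),
      (∃ φ : (Fin n → ℝ) × (Fin n_ψ → ℝ) × (Fin n_u → ℝ) → ℝ,
        Measurable φ ∧ ∀ x, c x = φ (ξ s x, ψ s x, u s x)) →
      IndepFun c (fun x => w s x j) μ := by
    rintro s j c ⟨φ, hφ, hc⟩
    have hcc : c = φ ∘ (fun x => (ξ s x, ψ s x, u s x)) := funext hc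
    rw [hcc]
    exact (hindep s).comp hφ (measurable_pi_apply j)
  have crosszero : ∀ (s : ℕ) (c : Ω → Fin n_u → ℝ),
      (∀ j, MemLp (fun x => c x j) 2 μ) →
      (∀ j, IndepFun (fun x => c x j) (fun x => w s x j) μ) →
      ∫ x, (∑ j, c x j * w s x j) ∂μ = 0 := by
    intro s c hc hi
    rw [integral_finset_sum _ (fun j _ => aux_integrable_mul (hc j) (hwc s j))]
    refine Finset.sum_eq_zero fun j _ => ?_
    rw [(hi j).integral_fun_mul_eq_mul_integral (hc j).aestronglyMeasurable (hwc s j).aestronglyMeasurable,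
      hwmean' s j, mul_zero]
  -- continuity of the state map
  have hGcont : Continuous (fun v : (Fin n → ℝ) × (Fin n_ψ → ℝ) × (Fin n_u → ℝ) =>
      Ahat.mulVec (Sum.elim (v.1 - ξs) (v.2.1 - ψs)) + Bhat.mulVec (v.2.2 - us)) := by
    apply Continuous.add
    · apply (aux_continuous_mulVec Ahat).comp
      apply continuous_pi
      intro i
      cases i with
      | inl i =>
        simp only [Sum.elim_inl, Pi.sub_apply]
        exact ((continuous_apply i).comp continuous_fst).sub continuous_const
      | inr i =>
        simp only [Sum.elim_inr, Pi.sub_apply]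
        exact ((continuous_apply i).comp (continuous_fst.comp continuous_snd)).sub
          continuous_const
    · exact (aux_continuous_mulVec Bhat).comp
        ((continuous_snd.comp continuous_snd).sub continuous_const)
  -- nonnegativity of the Lyapunov integrals
  have hVnonneg : ∀ s : ℕ, 0 ≤ ∫ x,
      Sum.elim (ξ s x - ξs) (ψ s x - ψs) ⬝ᵥ
        P.mulVec (Sum.elim (ξ s x - ξs) (ψ s x - ψs)) ∂μ := by
    intro s
    refine integral_nonneg fun x => ?_
    simpa using hP.dotProduct_mulVec_nonneg (Sum.elim (ξ s x - ξs) (ψ s x - ψs))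
  have hSnonneg : ∀ s : ℕ,
      0 ≤ ∫ x, (∑ i, (Cω.mulVec (ξ s x) i - Cω.mulVec ξs i) ^ 2) ∂μ :=
    fun s => integral_nonneg fun x => Finset.sum_nonneg fun i _ => sq_nonneg _
  -- integrability of the IQC terms
  have intZ : ∀ s : ℕ, Integrable (fun x => (z s x - zs) ⬝ᵥ M.mulVec (z s x - zs)) μ :=
    fun s => aux_integrable_dot (f := fun x => z s x - zs)
      (g := fun x => M.mulVec (z s x - zs)) (hzsc s)
      (fun i => aux_mulVec_memLp M (v := fun x => z s x - zs) (hzsc s) i)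
  -- the hard IQC gives nonnegative partial sums in expectation
  have hZsum : ∀ T : ℕ, 0 ≤ ∑ t ∈ Finset.range T,
      ∫ x, (z t x - zs) ⬝ᵥ M.mulVec (z t x - zs) ∂μ := by
    intro T
    have hpt : ∀ x, 0 ≤ ∑ t ∈ Finset.range T, (z t x - zs) ⬝ᵥ M.mulVec (z t x - zs) := by
      intro x
      cases T with
      | zero => simp
      | succ k => exact hIQC x k
    calc (0:ℝ) ≤ ∫ x, (∑ t ∈ Finset.range T, (z t x - zs) ⬝ᵥ M.mulVec (z t x - zs)) ∂μ :=
          integral_nonneg hpt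
      _ = _ := integral_finset_sum _ (fun t _ => intZ t)
  -- main one-step inequality
  have step : ∀ t : ℕ,
      (∫ x, (∑ i, (Cω.mulVec (ξ t x) i - Cω.mulVec ξs i) ^ 2) ∂μ)
      ≤ (∫ x, Sum.elim (ξ t x - ξs) (ψ t x - ψs) ⬝ᵥ
          P.mulVec (Sum.elim (ξ t x - ξs) (ψ t x - ψs)) ∂μ)
        - (∫ x, Sum.elim (ξ (t+1) x - ξs) (ψ (t+1) x - ψs) ⬝ᵥ
            P.mulVec (Sum.elim (ξ (t+1) x - ξs) (ψ (t+1) x - ψs)) ∂μ)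
        - lam * (∫ x, (z t x - zs) ⬝ᵥ M.mulVec (z t x - zs) ∂μ)
        + (R * Q).trace := by
    intro t
    -- integrability
    have intff : Integrable (fun x => (Ahat.mulVec (Sum.elim (ξ t x - ξs) (ψ t x - ψs)) + Bhat.mulVec (u t x - us)) ⬝ᵥ P.mulVec (Ahat.mulVec (Sum.elim (ξ t x - ξs) (ψ t x - ψs)) + Bhat.mulVec (u t x - us))) μ :=
      aux_integrable_dot (f := fun x => (Ahat.mulVec (Sum.elim (ξ t x - ξs) (ψ t x - ψs)) + Bhat.mulVec (u t x - us))) (g := fun x => P.mulVec (Ahat.mulVec (Sum.elim (ξ t x - ξs) (ψ t x - ψs)) + Bhat.mulVec (u t x - us)))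
        (hffc t) (fun i => aux_mulVec_memLp P (v := fun x => (Ahat.mulVec (Sum.elim (ξ t x - ξs) (ψ t x - ψs)) + Bhat.mulVec (u t x - us))) (hffc t) i)
    have intη : Integrable (fun x => Sum.elim (ξ t x - ξs) (ψ t x - ψs) ⬝ᵥ P.mulVec (Sum.elim (ξ t x - ξs) (ψ t x - ψs))) μ :=
      aux_integrable_dot (f := fun x => Sum.elim (ξ t x - ξs) (ψ t x - ψs)) (g := fun x => P.mulVec (Sum.elim (ξ t x - ξs) (ψ t x - ψs)))
        (hηc t) (fun i => aux_mulVec_memLp P (v := fun x => Sum.elim (ξ t x - ξs) (ψ t x - ψs)) (hηc t) i)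
    have intS : Integrable (fun x => ∑ i, (Cω.mulVec (ξ t x) i - Cω.mulVec ξs i) ^ 2) μ := by
      refine integrable_finset_sum _ fun i _ => ?_
      exact ((aux_mulVec_memLp Cω (v := fun x => ξ t x) (hξc t) i).sub
        (memLp_const (Cω.mulVec ξs i))).integrable_sq
    have intc1 : Integrable (fun x => (Ahat.mulVec (Sum.elim (ξ t x - ξs) (ψ t x - ψs)) + Bhat.mulVec (u t x - us)) ⬝ᵥ P.mulVec (Btil.mulVec (w t x))) μ :=
      aux_integrable_dot (f := fun x => (Ahat.mulVec (Sum.elim (ξ t x - ξs) (ψ t x - ψs)) + Bhat.mulVec (u t x - us))) (g := fun x => P.mulVec (Btil.mulVec (w t x)))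
        (hffc t) (fun i => aux_mulVec_memLp P (v := fun x => Btil.mulVec (w t x)) (hGGc t) i)
    have intc2 : Integrable (fun x => Btil.mulVec (w t x) ⬝ᵥ P.mulVec (Ahat.mulVec (Sum.elim (ξ t x - ξs) (ψ t x - ψs)) + Bhat.mulVec (u t x - us))) μ :=
      aux_integrable_dot (f := fun x => Btil.mulVec (w t x)) (g := fun x => P.mulVec (Ahat.mulVec (Sum.elim (ξ t x - ξs) (ψ t x - ψs)) + Bhat.mulVec (u t x - us)))
        (hGGc t) (fun i => aux_mulVec_memLp P (v := fun x => (Ahat.mulVec (Sum.elim (ξ t x - ξs) (ψ t x - ψs)) + Bhat.mulVec (u t x - us))) (hffc t) i)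
    have intgg : Integrable (fun x => Btil.mulVec (w t x) ⬝ᵥ P.mulVec (Btil.mulVec (w t x))) μ :=
      aux_integrable_dot (f := fun x => Btil.mulVec (w t x)) (g := fun x => P.mulVec (Btil.mulVec (w t x)))
        (hGGc t) (fun i => aux_mulVec_memLp P (v := fun x => Btil.mulVec (w t x)) (hGGc t) i)
    -- pathwise recursion
    have hrec : ∀ x, Sum.elim (ξ (t+1) x - ξs) (ψ (t+1) x - ψs) = (Ahat.mulVec (Sum.elim (ξ t x - ξs) (ψ t x - ψs)) + Bhat.mulVec (u t x - us)) + Btil.mulVec (w t x) := by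
      intro x
      have h1 : ξ (t+1) x - ξs
          = A.mulVec (ξ t x - ξs) + B.mulVec (u t x - us) + B.mulVec (w t x) := by
        rw [hξ x t]
        conv_lhs => rw [hξs]
        simp only [Matrix.mulVec_add, Matrix.mulVec_sub]
        abel
      have h2 : ψ (t+1) x - ψs
          = (BΨy * Cy).mulVec (ξ t x - ξs) + AΨ.mulVec (ψ t x - ψs)
            + BΨu.mulVec (u t x - us) := by
        rw [hψ x t]
        conv_lhs => rw [hψs]
        simp only [Matrix.mulVec_sub, ← Matrix.mulVec_mulVec]
        abel
      funext i
      rw [hAhat, hBhat, hBtil]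
      cases i with
      | inl i =>
        simp only [Matrix.fromBlocks_mulVec, Matrix.fromRows_mulVec, Pi.add_apply,
          Sum.elim_inl, Sum.elim_comp_inl, Sum.elim_comp_inr, Matrix.zero_mulVec,
          add_zero, Pi.sub_apply]
        have h := congrFun h1 i
        simp only [Pi.add_apply, Pi.sub_apply] at h
        linarith [h]
      | inr i =>
        simp only [Matrix.fromBlocks_mulVec, Matrix.fromRows_mulVec, Pi.add_apply,
          Sum.elim_inr, Sum.elim_comp_inl, Sum.elim_comp_inr, Matrix.zero_mulVec,
          add_zero, Pi.sub_apply, Pi.zero_apply]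
        have h := congrFun h2 i
        simp only [Pi.add_apply, Pi.sub_apply] at h
        linarith [h]
    -- split the Lyapunov integral at t+1
    have hVsplit : (∫ x, Sum.elim (ξ (t+1) x - ξs) (ψ (t+1) x - ψs) ⬝ᵥ
          P.mulVec (Sum.elim (ξ (t+1) x - ξs) (ψ (t+1) x - ψs)) ∂μ)
        = (∫ x, (Ahat.mulVec (Sum.elim (ξ t x - ξs) (ψ t x - ψs)) + Bhat.mulVec (u t x - us)) ⬝ᵥ P.mulVec (Ahat.mulVec (Sum.elim (ξ t x - ξs) (ψ t x - ψs)) + Bhat.mulVec (u t x - us)) ∂μ)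
          + ((∫ x, (Ahat.mulVec (Sum.elim (ξ t x - ξs) (ψ t x - ψs)) + Bhat.mulVec (u t x - us)) ⬝ᵥ P.mulVec (Btil.mulVec (w t x)) ∂μ)
            + ((∫ x, Btil.mulVec (w t x) ⬝ᵥ P.mulVec (Ahat.mulVec (Sum.elim (ξ t x - ξs) (ψ t x - ψs)) + Bhat.mulVec (u t x - us)) ∂μ)
              + (∫ x, Btil.mulVec (w t x) ⬝ᵥ P.mulVec (Btil.mulVec (w t x)) ∂μ))) := by
      have hpt : ∀ x, Sum.elim (ξ (t+1) x - ξs) (ψ (t+1) x - ψs) ⬝ᵥ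
            P.mulVec (Sum.elim (ξ (t+1) x - ξs) (ψ (t+1) x - ψs))
          = (Ahat.mulVec (Sum.elim (ξ t x - ξs) (ψ t x - ψs)) + Bhat.mulVec (u t x - us)) ⬝ᵥ P.mulVec (Ahat.mulVec (Sum.elim (ξ t x - ξs) (ψ t x - ψs)) + Bhat.mulVec (u t x - us))
            + ((Ahat.mulVec (Sum.elim (ξ t x - ξs) (ψ t x - ψs)) + Bhat.mulVec (u t x - us)) ⬝ᵥ P.mulVec (Btil.mulVec (w t x))
              + (Btil.mulVec (w t x) ⬝ᵥ P.mulVec (Ahat.mulVec (Sum.elim (ξ t x - ξs) (ψ t x - ψs)) + Bhat.mulVec (u t x - us)) + Btil.mulVec (w t x) ⬝ᵥ P.mulVec (Btil.mulVec (w t x)))) := by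
        intro x
        rw [hrec x]
        simp only [Matrix.mulVec_add, dotProduct_add, add_dotProduct]
        ring
      have i3 : ∫ x, (Btil.mulVec (w t x) ⬝ᵥ P.mulVec (Ahat.mulVec (Sum.elim (ξ t x - ξs) (ψ t x - ψs)) + Bhat.mulVec (u t x - us)) + Btil.mulVec (w t x) ⬝ᵥ P.mulVec (Btil.mulVec (w t x))) ∂μ
          = (∫ x, Btil.mulVec (w t x) ⬝ᵥ P.mulVec (Ahat.mulVec (Sum.elim (ξ t x - ξs) (ψ t x - ψs)) + Bhat.mulVec (u t x - us)) ∂μ) + ∫ x, Btil.mulVec (w t x) ⬝ᵥ P.mulVec (Btil.mulVec (w t x)) ∂μ :=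
        integral_add intc2 intgg
      have i2 : ∫ x, ((Ahat.mulVec (Sum.elim (ξ t x - ξs) (ψ t x - ψs)) + Bhat.mulVec (u t x - us)) ⬝ᵥ P.mulVec (Btil.mulVec (w t x)) + (Btil.mulVec (w t x) ⬝ᵥ P.mulVec (Ahat.mulVec (Sum.elim (ξ t x - ξs) (ψ t x - ψs)) + Bhat.mulVec (u t x - us)) + Btil.mulVec (w t x) ⬝ᵥ P.mulVec (Btil.mulVec (w t x)))) ∂μ
          = (∫ x, (Ahat.mulVec (Sum.elim (ξ t x - ξs) (ψ t x - ψs)) + Bhat.mulVec (u t x - us)) ⬝ᵥ P.mulVec (Btil.mulVec (w t x)) ∂μ) + ∫ x, (Btil.mulVec (w t x) ⬝ᵥ P.mulVec (Ahat.mulVec (Sum.elim (ξ t x - ξs) (ψ t x - ψs)) + Bhat.mulVec (u t x - us)) + Btil.mulVec (w t x) ⬝ᵥ P.mulVec (Btil.mulVec (w t x))) ∂μ :=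
        integral_add intc1 (intc2.add intgg)
      have i1 : ∫ x, ((Ahat.mulVec (Sum.elim (ξ t x - ξs) (ψ t x - ψs)) + Bhat.mulVec (u t x - us)) ⬝ᵥ P.mulVec (Ahat.mulVec (Sum.elim (ξ t x - ξs) (ψ t x - ψs)) + Bhat.mulVec (u t x - us)) + ((Ahat.mulVec (Sum.elim (ξ t x - ξs) (ψ t x - ψs)) + Bhat.mulVec (u t x - us)) ⬝ᵥ P.mulVec (Btil.mulVec (w t x)) + (Btil.mulVec (w t x) ⬝ᵥ P.mulVec (Ahat.mulVec (Sum.elim (ξ t x - ξs) (ψ t x - ψs)) + Bhat.mulVec (u t x - us)) + Btil.mulVec (w t x) ⬝ᵥ P.mulVec (Btil.mulVec (w t x))))) ∂μ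
          = (∫ x, (Ahat.mulVec (Sum.elim (ξ t x - ξs) (ψ t x - ψs)) + Bhat.mulVec (u t x - us)) ⬝ᵥ P.mulVec (Ahat.mulVec (Sum.elim (ξ t x - ξs) (ψ t x - ψs)) + Bhat.mulVec (u t x - us)) ∂μ) + ∫ x, ((Ahat.mulVec (Sum.elim (ξ t x - ξs) (ψ t x - ψs)) + Bhat.mulVec (u t x - us)) ⬝ᵥ P.mulVec (Btil.mulVec (w t x)) + (Btil.mulVec (w t x) ⬝ᵥ P.mulVec (Ahat.mulVec (Sum.elim (ξ t x - ξs) (ψ t x - ψs)) + Bhat.mulVec (u t x - us)) + Btil.mulVec (w t x) ⬝ᵥ P.mulVec (Btil.mulVec (w t x)))) ∂μ :=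
        integral_add intff (intc1.add (intc2.add intgg))
      rw [integral_congr_ae (Filter.Eventually.of_forall hpt), i1, i2, i3]
    -- cross terms vanish
    have hc1 : ∫ x, (Ahat.mulVec (Sum.elim (ξ t x - ξs) (ψ t x - ψs)) + Bhat.mulVec (u t x - us)) ⬝ᵥ P.mulVec (Btil.mulVec (w t x)) ∂μ = 0 := by
      have e1 : (fun x => (Ahat.mulVec (Sum.elim (ξ t x - ξs) (ψ t x - ψs)) + Bhat.mulVec (u t x - us)) ⬝ᵥ P.mulVec (Btil.mulVec (w t x)))
          = fun x => ∑ j, (∑ i, (P * Btil) i j * (Ahat.mulVec (Sum.elim (ξ t x - ξs) (ψ t x - ψs)) + Bhat.mulVec (u t x - us)) i) * w t x j := by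
        funext x
        rw [Matrix.mulVec_mulVec, aux_dot_mulVec_expand]
      rw [e1]
      refine crosszero t (fun x j => ∑ i, (P * Btil) i j * (Ahat.mulVec (Sum.elim (ξ t x - ξs) (ψ t x - ψs)) + Bhat.mulVec (u t x - us)) i) ?_ ?_
      · intro j
        exact aux_memLp_sum_mul (v := fun x => (Ahat.mulVec (Sum.elim (ξ t x - ξs) (ψ t x - ψs)) + Bhat.mulVec (u t x - us))) (hffc t) _
      · intro j
        refine hindepφ t j _ ⟨fun v => ∑ i, (P * Btil) i j *
          ((Ahat.mulVec (Sum.elim (v.1 - ξs) (v.2.1 - ψs)) + Bhat.mulVec (v.2.2 - us)) i),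
          ?_, fun x => rfl⟩
        exact (continuous_finset_sum _ fun i _ =>
          continuous_const.mul ((continuous_apply i).comp hGcont)).measurable
    have hc2 : ∫ x, Btil.mulVec (w t x) ⬝ᵥ P.mulVec (Ahat.mulVec (Sum.elim (ξ t x - ξs) (ψ t x - ψs)) + Bhat.mulVec (u t x - us)) ∂μ = 0 := by
      have e2 : (fun x => Btil.mulVec (w t x) ⬝ᵥ P.mulVec (Ahat.mulVec (Sum.elim (ξ t x - ξs) (ψ t x - ψs)) + Bhat.mulVec (u t x - us)))
          = fun x => ∑ j, (∑ i, Btil i j * (P.mulVec (Ahat.mulVec (Sum.elim (ξ t x - ξs) (ψ t x - ψs)) + Bhat.mulVec (u t x - us))) i) * w t x j := by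
        funext x
        rw [dotProduct_comm, aux_dot_mulVec_expand]
      rw [e2]
      refine crosszero t (fun x j => ∑ i, Btil i j * (P.mulVec (Ahat.mulVec (Sum.elim (ξ t x - ξs) (ψ t x - ψs)) + Bhat.mulVec (u t x - us))) i) ?_ ?_
      · intro j
        exact aux_memLp_sum_mul (v := fun x => P.mulVec (Ahat.mulVec (Sum.elim (ξ t x - ξs) (ψ t x - ψs)) + Bhat.mulVec (u t x - us)))
          (fun i => aux_mulVec_memLp P (v := fun x => (Ahat.mulVec (Sum.elim (ξ t x - ξs) (ψ t x - ψs)) + Bhat.mulVec (u t x - us))) (hffc t) i) _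
      · intro j
        refine hindepφ t j _ ⟨fun v => ∑ i, Btil i j *
          (P.mulVec (Ahat.mulVec (Sum.elim (v.1 - ξs) (v.2.1 - ψs))
            + Bhat.mulVec (v.2.2 - us)) i),
          ?_, fun x => rfl⟩
        exact (continuous_finset_sum _ fun i _ => continuous_const.mul
          ((continuous_apply i).comp ((aux_continuous_mulVec P).comp hGcont))).measurable
    -- noise quadratic term
    have hgg : ∫ x, Btil.mulVec (w t x) ⬝ᵥ P.mulVec (Btil.mulVec (w t x)) ∂μ ≤ (R * Q).trace := by
      have e3 : ∀ x, Btil.mulVec (w t x) ⬝ᵥ P.mulVec (Btil.mulVec (w t x))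
          = ∑ j, ∑ j', Q j j' * (w t x j * w t x j') := by
        intro x
        have h1 : w t x ⬝ᵥ Q.mulVec (w t x) = Btil.mulVec (w t x) ⬝ᵥ P.mulVec (Btil.mulVec (w t x)) := by
          rw [hQdef, Matrix.mul_assoc, ← Matrix.mulVec_mulVec, dotProduct_mulVec,
            Matrix.vecMul_transpose, ← Matrix.mulVec_mulVec]
        rw [← h1]
        simp only [dotProduct, Matrix.mulVec, Finset.mul_sum]
        exact Finset.sum_congr rfl fun j _ => Finset.sum_congr rfl fun j' _ => by ring
      rw [integral_congr_ae (Filter.Eventually.of_forall e3)]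
      have e5 : ∫ x, (∑ j, ∑ j', Q j j' * (w t x j * w t x j')) ∂μ
          = ∑ j, ∑ j', Q j j' * ∫ x, w t x j * w t x j' ∂μ := by
        rw [integral_finset_sum _ (fun j _ => integrable_finset_sum _ fun j' _ =>
          (aux_integrable_mul (hwc t j) (hwc t j')).const_mul (Q j j'))]
        refine Finset.sum_congr rfl fun j _ => ?_
        rw [integral_finset_sum _ (fun j' _ =>
          (aux_integrable_mul (hwc t j) (hwc t j')).const_mul (Q j j'))]
        exact Finset.sum_congr rfl fun j' _ => integral_const_mul _ _
      rw [e5]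
      have hsym : ∀ j j', (∫ x, w t x j * w t x j' ∂μ) = ∫ x, w t x j' * w t x j ∂μ :=
        fun j j' => integral_congr_ae (Filter.Eventually.of_forall fun x => mul_comm _ _)
      have htr : ((Matrix.of fun j j' => ∫ x, w t x j * w t x j' ∂μ) * Q).trace
          = ∑ j, ∑ j', Q j j' * ∫ x, w t x j * w t x j' ∂μ := by
        simp only [Matrix.trace, Matrix.diag, Matrix.mul_apply, Matrix.of_apply]
        rw [Finset.sum_comm]
        exact Finset.sum_congr rfl fun j _ => Finset.sum_congr rfl fun i _ => by
          rw [hsym i j]; ring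
      rw [← htr]
      exact aux_trace_mono (hwcov t) hQpsd
    -- LMI step
    have hlmi : ∫ x, (Ahat.mulVec (Sum.elim (ξ t x - ξs) (ψ t x - ψs)) + Bhat.mulVec (u t x - us)) ⬝ᵥ P.mulVec (Ahat.mulVec (Sum.elim (ξ t x - ξs) (ψ t x - ψs)) + Bhat.mulVec (u t x - us)) ∂μ
        ≤ (∫ x, Sum.elim (ξ t x - ξs) (ψ t x - ψs) ⬝ᵥ P.mulVec (Sum.elim (ξ t x - ξs) (ψ t x - ψs)) ∂μ)
          - lam * (∫ x, (z t x - zs) ⬝ᵥ M.mulVec (z t x - zs) ∂μ)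
          - (∫ x, (∑ i, (Cω.mulVec (ξ t x) i - Cω.mulVec ξs i) ^ 2) ∂μ) := by
      have hdz : ∀ x, z t x - zs
          = Chat.mulVec (Sum.elim (ξ t x - ξs) (ψ t x - ψs)) + DΨu.mulVec (u t x - us) := by
        intro x
        rw [hz x t]
        conv_lhs => rw [hzs]
        rw [hChat, Matrix.fromCols_mulVec_sumElim]
        simp only [Matrix.mulVec_sub, ← Matrix.mulVec_mulVec]
        abel
      have hpt : ∀ x, (Ahat.mulVec (Sum.elim (ξ t x - ξs) (ψ t x - ψs)) + Bhat.mulVec (u t x - us)) ⬝ᵥ P.mulVec (Ahat.mulVec (Sum.elim (ξ t x - ξs) (ψ t x - ψs)) + Bhat.mulVec (u t x - us))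
          ≤ Sum.elim (ξ t x - ξs) (ψ t x - ψs) ⬝ᵥ P.mulVec (Sum.elim (ξ t x - ξs) (ψ t x - ψs))
            - lam * ((z t x - zs) ⬝ᵥ M.mulVec (z t x - zs))
            - ∑ i, (Cω.mulVec (ξ t x) i - Cω.mulVec ξs i) ^ 2 := by
        intro x
        have hker : Fξ.mulVec (ξ t x - ξs) + Fu.mulVec (u t x - us) = 0 := by
          rw [Matrix.mulVec_sub, Matrix.mulVec_sub, sub_add_sub_comm, hinv x t, hinvs,
            sub_zero]
        have h := hLMI (ξ t x - ξs) (ψ t x - ψs) (u t x - us) hker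
        rw [← hdz x] at h
        have hCω : ∀ i, Cω.mulVec (ξ t x - ξs) i = Cω.mulVec (ξ t x) i - Cω.mulVec ξs i := by
          intro i
          rw [Matrix.mulVec_sub]
          rfl
        simp only [hCω] at h
        linarith [h]
      have hmono := integral_mono intff
        ((intη.sub ((intZ t).const_mul lam)).sub intS) hpt
      have j1 : ∫ x, (Sum.elim (ξ t x - ξs) (ψ t x - ψs) ⬝ᵥ P.mulVec (Sum.elim (ξ t x - ξs) (ψ t x - ψs))
            - lam * ((z t x - zs) ⬝ᵥ M.mulVec (z t x - zs))
            - ∑ i, (Cω.mulVec (ξ t x) i - Cω.mulVec ξs i) ^ 2) ∂μ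
          = (∫ x, (Sum.elim (ξ t x - ξs) (ψ t x - ψs) ⬝ᵥ P.mulVec (Sum.elim (ξ t x - ξs) (ψ t x - ψs))
              - lam * ((z t x - zs) ⬝ᵥ M.mulVec (z t x - zs))) ∂μ)
            - ∫ x, (∑ i, (Cω.mulVec (ξ t x) i - Cω.mulVec ξs i) ^ 2) ∂μ :=
        integral_sub (intη.sub ((intZ t).const_mul lam)) intS
      have j2 : ∫ x, (Sum.elim (ξ t x - ξs) (ψ t x - ψs) ⬝ᵥ P.mulVec (Sum.elim (ξ t x - ξs) (ψ t x - ψs))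
            - lam * ((z t x - zs) ⬝ᵥ M.mulVec (z t x - zs))) ∂μ
          = (∫ x, Sum.elim (ξ t x - ξs) (ψ t x - ψs) ⬝ᵥ P.mulVec (Sum.elim (ξ t x - ξs) (ψ t x - ψs)) ∂μ)
            - ∫ x, lam * ((z t x - zs) ⬝ᵥ M.mulVec (z t x - zs)) ∂μ :=
        integral_sub intη ((intZ t).const_mul lam)
      have j3 : ∫ x, lam * ((z t x - zs) ⬝ᵥ M.mulVec (z t x - zs)) ∂μ
          = lam * ∫ x, (z t x - zs) ⬝ᵥ M.mulVec (z t x - zs) ∂μ :=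
        integral_const_mul lam _
      simp only [Pi.sub_apply] at hmono
      linarith [hmono, j1, j2, j3]
    linarith [hVsplit, hc1, hc2, hgg, hlmi]
  -- telescoping sum bound
  have hsum : ∀ T : ℕ,
      (∑ t ∈ Finset.range T, ∫ x, (∑ i, (Cω.mulVec (ξ t x) i - Cω.mulVec ξs i) ^ 2) ∂μ)
      ≤ (∫ x, Sum.elim (ξ 0 x - ξs) (ψ 0 x - ψs) ⬝ᵥ
          P.mulVec (Sum.elim (ξ 0 x - ξs) (ψ 0 x - ψs)) ∂μ) + T * (R * Q).trace := by
    intro T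
    have h1 := Finset.sum_le_sum (fun t (_ : t ∈ Finset.range T) => step t)
    have h2 : ∑ t ∈ Finset.range T,
        ((∫ x, Sum.elim (ξ t x - ξs) (ψ t x - ψs) ⬝ᵥ
            P.mulVec (Sum.elim (ξ t x - ξs) (ψ t x - ψs)) ∂μ)
          - (∫ x, Sum.elim (ξ (t+1) x - ξs) (ψ (t+1) x - ψs) ⬝ᵥ
              P.mulVec (Sum.elim (ξ (t+1) x - ξs) (ψ (t+1) x - ψs)) ∂μ)
          - lam * (∫ x, (z t x - zs) ⬝ᵥ M.mulVec (z t x - zs) ∂μ)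
          + (R * Q).trace)
        = ((∫ x, Sum.elim (ξ 0 x - ξs) (ψ 0 x - ψs) ⬝ᵥ
            P.mulVec (Sum.elim (ξ 0 x - ξs) (ψ 0 x - ψs)) ∂μ)
          - (∫ x, Sum.elim (ξ T x - ξs) (ψ T x - ψs) ⬝ᵥ
              P.mulVec (Sum.elim (ξ T x - ξs) (ψ T x - ψs)) ∂μ))
          - lam * (∑ t ∈ Finset.range T, ∫ x, (z t x - zs) ⬝ᵥ M.mulVec (z t x - zs) ∂μ)
          + T * (R * Q).trace := by
      rw [Finset.sum_add_distrib, Finset.sum_sub_distrib, Finset.sum_range_sub',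
        ← Finset.mul_sum, Finset.sum_const, Finset.card_range, nsmul_eq_mul]
    rw [h2] at h1
    have h3 : 0 ≤ lam * ∑ t ∈ Finset.range T,
        ∫ x, (z t x - zs) ⬝ᵥ M.mulVec (z t x - zs) ∂μ := mul_nonneg hlam (hZsum T)
    have h4 := hVnonneg T
    linarith [h1]
  -- conclude via the limsup lemma
  rw [hQid]
  refine aux_limsup_le (C := ∫ x, Sum.elim (ξ 0 x - ξs) (ψ 0 x - ψs) ⬝ᵥ
      P.mulVec (Sum.elim (ξ 0 x - ξs) (ψ 0 x - ψs)) ∂μ) ?_ ?_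
  · intro T
    exact mul_nonneg (one_div_nonneg.2 (Nat.cast_nonneg T))
      (Finset.sum_nonneg fun t _ => hSnonneg t)
  · intro T hT
    have hT0 : (0:ℝ) < T := by exact_mod_cast hT
    have h := hsum T
    calc (1 / (T:ℝ)) * ∑ t ∈ Finset.range T,
          ∫ x, (∑ i, (Cω.mulVec (ξ t x) i - Cω.mulVec ξs i) ^ 2) ∂μ
        ≤ (1 / (T:ℝ)) * ((∫ x, Sum.elim (ξ 0 x - ξs) (ψ 0 x - ψs) ⬝ᵥ
            P.mulVec (Sum.elim (ξ 0 x - ξs) (ψ 0 x - ψs)) ∂μ) + T * (R * Q).trace) :=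
          mul_le_mul_of_nonneg_left h (by positivity)
      _ = (∫ x, Sum.elim (ξ 0 x - ξs) (ψ 0 x - ψs) ⬝ᵥ
            P.mulVec (Sum.elim (ξ 0 x - ξs) (ψ 0 x - ψs)) ∂μ) / T + (R * Q).trace := by
          field_simp
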